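/- Let U be a bounded subset of ℂ and let 0 < γ < π/2. Then there exists a constant C' > 0 such that for all ẑ ∈ U and all z ∈ ℂ with z ≠ 0 and |Arg(z)| < γ, one has Im(R̂(ẑ,z)) ≥ Im(z) − C', where R̂(ẑ,z) := (ẑ + z²)^{1/2}. -/

import Mathlib

open Complex Real

/-- The principal square root `R̂(ẑ,z) := (ẑ + z²)^{1/2}`. -/
noncomputable def Rhat (zhat z : ℂ) : ℂ := (zhat + z ^ 2) ^ ((1 : ℂ) / 2)

lemma Rhat_re_nonneg (zhat z : ℂ) : 0 ≤ (Rhat zhat z).re := by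
  have : (1 : ℂ) / 2 = (2⁻¹ : ℂ) := by norm_num
  rw [Rhat, this, Complex.cpow_inv_two_re]
  exact Real.sqrt_nonneg _

lemma Rhat_sq (zhat z : ℂ) : (Rhat zhat z) ^ 2 = zhat + z ^ 2 := by
  set w := zhat + z ^ 2 with hw
  rcases eq_or_ne w 0 with h | h
  · simp [Rhat, ← hw, h, Complex.zero_cpow (by norm_num : (1:ℂ)/2 ≠ 0)]
  · rw [Rhat, ← hw, sq, ← Complex.cpow_add _ _ h]
    norm_num

/-- If `U ⊂ ℂ` is bounded and `0 < γ < π/2`, there exists `C' > 0` such that, for all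
`ẑ ∈ U` and all `z ∈ ℂ` with `z ≠ 0` and `|Arg z| < γ`, `Im(R̂(ẑ,z)) ≥ Im(z) − C'`. -/
theorem stmt_5 (U : Set ℂ) (hU : Bornology.IsBounded U) (γ : ℝ)
    (hγ₀ : 0 < γ) (hγ₁ : γ < π / 2) :
    ∃ C' > (0 : ℝ), ∀ zhat ∈ U, ∀ z : ℂ, z ≠ 0 → |z.arg| < γ →
      z.im - C' ≤ (Rhat zhat z).im := by
  obtain ⟨M₀, hM₀⟩ := hU.exists_norm_le
  set M : ℝ := max M₀ 0 with hMdef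
  have hM : 0 ≤ M := le_max_right _ _
  have hMb : ∀ zhat ∈ U, ‖zhat‖ ≤ M := fun zhat hz =>
    le_trans (hM₀ zhat hz) (le_max_left _ _)
  set c : ℝ := Real.cos γ with hc
  have hcpos : 0 < c := Real.cos_pos_of_mem_Ioo ⟨by linarith [Real.pi_pos], hγ₁⟩
  set B : ℝ := M / c + Real.sqrt (M + (M / c) ^ 2) with hB
  have hBnn : 0 ≤ B := by positivity
  refine ⟨B + 1, by positivity, ?_⟩
  intro zhat hzU z hz hargz
  by_contra hcon
  push_neg at hcon
  set R : ℂ := Rhat zhat z with hR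
  set C' : ℝ := B + 1 with hC'
  have hC1 : 1 ≤ C' := by simp [hC']; positivity
  have hC'pos : 0 < C' := by linarith
  -- |R - z| > C'
  have himlt : (R - z).im < -C' := by
    simp only [Complex.sub_im]
    linarith
  have habs1 : C' < ‖R - z‖ := by
    have := Complex.abs_im_le_norm (R - z)
    have : -(R - z).im ≤ ‖R - z‖ := by
      rw [← abs_neg] at this
      exact le_trans (le_abs_self _) (by simpa using this)
    linarith
  -- (R - z) * (R + z) = zhat
  have hprod : (R - z) * (R + z) = zhat := by
    have := Rhat_sq zhat z
    rw [← hR] at this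
    ring_nf
    linear_combination this
  have habsprod : ‖R - z‖ * ‖R + z‖ = ‖zhat‖ := by
    rw [← norm_mul, hprod]
  -- |R + z| ≤ M / C'
  have habs2 : ‖R + z‖ ≤ M / C' := by
    rw [le_div_iff₀ hC'pos]
    calc ‖R + z‖ * C' ≤ ‖R + z‖ * ‖R - z‖ := by
          exact mul_le_mul_of_nonneg_left habs1.le (norm_nonneg _)
      _ = ‖zhat‖ := by rw [mul_comm]; exact habsprod
      _ ≤ M := hMb zhat hzU
  -- Re z ≥ c |z|
  have hrez : c * ‖z‖ ≤ z.re := by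
    have hcos := Complex.cos_arg hz
    have habsz : 0 < ‖z‖ := norm_pos_iff.mpr hz
    have hle : c ≤ Real.cos z.arg := by
      rw [← Real.cos_abs z.arg]
      exact Real.cos_le_cos_of_nonneg_of_le_pi (abs_nonneg _)
        (by linarith [Real.pi_pos]) hargz.le
    calc c * ‖z‖ ≤ Real.cos z.arg * ‖z‖ :=
          mul_le_mul_of_nonneg_right hle habsz.le
      _ = z.re := by rw [hcos]; field_simp
  -- |z| ≤ M / c
  have hzle : ‖z‖ ≤ M / c := by
    have h1 : z.re ≤ (R + z).re := by
      have := Rhat_re_nonneg zhat z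
      simp only [Complex.add_re]
      linarith
    have h2 : (R + z).re ≤ ‖R + z‖ := Complex.re_le_norm _
    have h3 : c * ‖z‖ ≤ M / C' := by linarith
    have h4 : M / C' ≤ M := by
      rw [div_le_iff₀ hC'pos]
      nlinarith
    rw [le_div_iff₀ hcpos]
    nlinarith
  -- |R| ≤ sqrt (M + (M/c)^2)
  have hRle : ‖R‖ ≤ Real.sqrt (M + (M / c) ^ 2) := by
    have h1 : (‖R‖) ^ 2 = ‖zhat + z ^ 2‖ := by
      rw [← norm_pow, Rhat_sq]
    have h2 : ‖zhat + z ^ 2‖ ≤ M + (M / c) ^ 2 := by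
      calc ‖zhat + z ^ 2‖ ≤ ‖zhat‖ + ‖z ^ 2‖ :=
            norm_add_le _ _
        _ ≤ M + (M / c) ^ 2 := by
            have := hMb zhat hzU
            have h5 : ‖z ^ 2‖ = (‖z‖) ^ 2 := norm_pow _ _
            have h6 : (‖z‖) ^ 2 ≤ (M / c) ^ 2 := by
              apply pow_le_pow_left₀ (norm_nonneg _) hzle
            linarith
    have h3 : (‖R‖) ^ 2 ≤ M + (M / c) ^ 2 := by linarith
    have := Real.sqrt_le_sqrt h3
    rwa [Real.sqrt_sq (norm_nonneg _)] at this
  -- conclude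
  have himz : z.im ≤ M / c := le_trans (Complex.im_le_norm z) hzle
  have himR : -Real.sqrt (M + (M / c) ^ 2) ≤ R.im := by
    have := Complex.abs_im_le_norm R
    have := abs_le.mp (le_trans (Complex.abs_im_le_norm R) hRle)
    linarith [this.1]
  have : z.im - R.im ≤ B := by rw [hB]; linarith
  linarith
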